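/- Let γ⁺ and γ⁻ be positive real numbers, and let ρ ≥ 0 and n ≥ 0 be real numbers with ρ + n > 0. Then there exists a unique real number x > 0 such that x^(γ⁺/γ⁻)·(x − ρ) = n·x; moreover this unique x satisfies x ≥ ρ. -/

import Mathlib

open Real Set

private lemma biFluid_aux_mono (a ρ : ℝ) (ha : 0 < a) (hρ : 0 ≤ ρ)
    {x y : ℝ} (hx : 0 < x) (hρx : ρ ≤ x) (hxy : x < y) :
    x ^ a - ρ * x ^ (a - 1) < y ^ a - ρ * y ^ (a - 1) := by
  have hy : 0 < y := hx.trans hxy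
  rcases le_or_gt 1 a with h1 | h1
  · -- a ≥ 1 : rewrite as x^(a-1)*(x-ρ)
    have ex : x ^ a - ρ * x ^ (a - 1) = x ^ (a - 1) * (x - ρ) := by
      rw [Real.rpow_sub_one hx.ne']; field_simp
    have ey : y ^ a - ρ * y ^ (a - 1) = y ^ (a - 1) * (y - ρ) := by
      rw [Real.rpow_sub_one hy.ne']; field_simp
    rw [ex, ey]
    have h2 : x ^ (a - 1) * (x - ρ) ≤ y ^ (a - 1) * (x - ρ) :=
      mul_le_mul_of_nonneg_right
        (Real.rpow_le_rpow hx.le hxy.le (by linarith)) (by linarith)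
    have h3 : y ^ (a - 1) * (x - ρ) < y ^ (a - 1) * (y - ρ) :=
      mul_lt_mul_of_pos_left (by linarith) (Real.rpow_pos_of_pos hy _)
    linarith
  · -- a < 1
    have h2 : x ^ a < y ^ a := Real.rpow_lt_rpow hx.le hxy ha
    have h3 : y ^ (a - 1) ≤ x ^ (a - 1) :=
      Real.rpow_le_rpow_of_nonpos hx hxy.le (by linarith)
    have h4 : ρ * y ^ (a - 1) ≤ ρ * x ^ (a - 1) :=
      mul_le_mul_of_nonneg_left h3 hρ
    linarith

theorem biFluid_dominant_density_exists_unique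
    (gp gm ρ n : ℝ) (hgp : 0 < gp) (hgm : 0 < gm)
    (hρ : 0 ≤ ρ) (hn : 0 ≤ n) (hsum : 0 < ρ + n) :
    (∃! x : ℝ, 0 < x ∧ x ^ (gp / gm) * (x - ρ) = n * x) ∧
      (∀ x : ℝ, 0 < x → x ^ (gp / gm) * (x - ρ) = n * x → ρ ≤ x) := by
  set a := gp / gm with ha_def
  have ha : 0 < a := div_pos hgp hgm
  set F : ℝ → ℝ := fun x => x ^ a - ρ * x ^ (a - 1) with hF
  -- second part
  have key : ∀ x : ℝ, 0 < x → x ^ a * (x - ρ) = n * x → ρ ≤ x := by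
    intro x hx heq
    have hpow : 0 < x ^ a := Real.rpow_pos_of_pos hx a
    have h2 : 0 ≤ x ^ a * (x - ρ) := heq ▸ mul_nonneg hn hx.le
    have := (mul_nonneg_iff_of_pos_left hpow).mp h2
    linarith
  -- equation ↔ F x = n for x > 0
  have equiv : ∀ x : ℝ, 0 < x → (x ^ a * (x - ρ) = n * x ↔ F x = n) := by
    intro x hx
    have hx1 : x ^ (a - 1) = x ^ a / x := Real.rpow_sub_one hx.ne' a
    constructor
    · intro h
      simp only [hF, hx1]
      field_simp
      nlinarith [h]
    · intro h
      simp only [hF, hx1] at h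
      field_simp at h
      nlinarith [h]
  -- existence of root of F = n in {x | 0 < x ∧ ρ ≤ x}
  have exists_root : ∃ x : ℝ, 0 < x ∧ ρ ≤ x ∧ F x = n := by
    rcases eq_or_lt_of_le hρ with hρ0 | hρ0
    · -- ρ = 0, explicit root n^(1/a); note n > 0
      have hn0 : 0 < n := by linarith
      refine ⟨n ^ (1 / a), Real.rpow_pos_of_pos hn0 _, by
        rw [← hρ0]; exact (Real.rpow_pos_of_pos hn0 _).le, ?_⟩
      simp only [hF, ← hρ0, zero_mul, sub_zero]
      rw [← Real.rpow_mul hn0.le, one_div, inv_mul_cancel₀ ha.ne', Real.rpow_one]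
    · -- ρ > 0 : IVT on [ρ, M]
      set M : ℝ := max (2 * ρ) (max 1 ((2 * n) ^ (1 / a))) with hM
      have hM2ρ : 2 * ρ ≤ M := le_max_left _ _
      have hM1 : (1:ℝ) ≤ M := le_trans (le_max_left _ _) (le_max_right _ _)
      have hMpos : 0 < M := lt_of_lt_of_le one_pos hM1
      have hρM : ρ ≤ M := by linarith
      have hMa : 2 * n ≤ M ^ a := by
        have h1 : (2 * n) ^ (1 / a) ≤ M := le_trans (le_max_right _ _) (le_max_right _ _)
        have h2 : ((2 * n) ^ (1 / a)) ^ a ≤ M ^ a :=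
          Real.rpow_le_rpow (Real.rpow_nonneg (by linarith) _) h1 ha.le
        rwa [← Real.rpow_mul (by linarith), one_div, inv_mul_cancel₀ ha.ne',
          Real.rpow_one] at h2
      have hFρ : F ρ = 0 := by
        simp only [hF, Real.rpow_sub_one hρ0.ne']
        field_simp
        simp
      have hFM : n ≤ F M := by
        have h1 : M ^ (a - 1) = M ^ a / M := Real.rpow_sub_one hMpos.ne' a
        have h2 : 0 ≤ M ^ (a - 1) := Real.rpow_nonneg hMpos.le _
        have h3 : ρ * M ^ (a - 1) ≤ (M / 2) * M ^ (a - 1) :=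
          mul_le_mul_of_nonneg_right (by linarith) h2
        have h4 : (M / 2) * M ^ (a - 1) = M ^ a / 2 := by
          rw [h1]; field_simp
        simp only [hF]
        nlinarith
      have hcont : ContinuousOn F (Icc ρ M) := by
        apply ContinuousOn.sub
        · exact (continuousOn_id.rpow_const fun x hx =>
            Or.inl (ne_of_gt (lt_of_lt_of_le hρ0 hx.1)))
        · exact continuousOn_const.mul (continuousOn_id.rpow_const fun x hx =>
            Or.inl (ne_of_gt (lt_of_lt_of_le hρ0 hx.1)))
      have hmem : n ∈ Icc (F ρ) (F M) := by rw [hFρ]; exact ⟨hn, hFM⟩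
      obtain ⟨x, hxmem, hxF⟩ := intermediate_value_Icc hρM hcont hmem
      exact ⟨x, lt_of_lt_of_le hρ0 hxmem.1, hxmem.1, hxF⟩
  obtain ⟨x, hx0, hρx, hxF⟩ := exists_root
  have hxeq : x ^ a * (x - ρ) = n * x := (equiv x hx0).mpr hxF
  refine ⟨⟨x, ⟨hx0, hxeq⟩, ?_⟩, key⟩
  rintro y ⟨hy0, hyeq⟩
  have hρy : ρ ≤ y := key y hy0 hyeq
  have hyF : F y = n := (equiv y hy0).mp hyeq
  rcases lt_trichotomy y x with h | h | h
  · have hlt : F y < F x := biFluid_aux_mono a ρ ha hρ hy0 hρy h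
    linarith
  · exact h
  · have hlt : F x < F y := biFluid_aux_mono a ρ ha hρ hx0 hρx h
    linarith
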